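/- Let M, M̂ ∈ ℝ^{d×d} be symmetric positive semidefinite matrices such that D := M − M̂ is symmetric positive semidefinite, and let ε_1 ≥ ε_2 ≥ … ≥ ε_d ≥ 0 be the eigenvalues of D in non-increasing order. Let W ∈ ℝ^{r×d} satisfy W Wᵀ = I_r, let G ∈ ℝ^{r×r} be symmetric positive definite with G − σ² I_r positive semidefinite for some σ² > 0, and let L ∈ ℝ^{r×r} satisfy L Lᵀ = G^{-1}. Then |(1/2)·log det(I_r + Lᵀ W M Wᵀ L) − (1/2)·log det(I_r + Lᵀ W M̂ Wᵀ L)| ≤ (1/2)·Σ_{i=1}^d log(1 + ε_i/σ²). -/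

import Mathlib

open Matrix

variable {n m : Type*} [Fintype n] [DecidableEq n] [Fintype m] [DecidableEq m]

lemma psd_conj {A : Matrix n n ℝ} (hA : A.PosSemidef) (B : Matrix m n ℝ) :
    (B * A * Bᵀ).PosSemidef := by
  simpa [conjTranspose_eq_transpose_of_trivial] using hA.mul_mul_conjTranspose_same B

lemma psd_smul {A : Matrix n n ℝ} (hA : A.PosSemidef) {c : ℝ} (hc : 0 ≤ c) :
    (c • A).PosSemidef := by
  refine ⟨?_, fun x => ?_⟩
  · unfold Matrix.IsHermitian
    rw [conjTranspose_smul, hA.1.eq]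
    simp
  · have := hA.2 x
    exact (hA.smul hc).2 x

set_option linter.unusedSectionVars false

open scoped MatrixOrder in
noncomputable def Matrix.PosSemidef.sqrt {A : Matrix n n ℝ} (_hA : A.PosSemidef) : Matrix n n ℝ :=
  CFC.sqrt A

open scoped MatrixOrder in
lemma Matrix.PosSemidef.sqrt_mul_self {A : Matrix n n ℝ} (hA : A.PosSemidef) :
    hA.sqrt * hA.sqrt = A :=
  CFC.sqrt_mul_sqrt_self A hA.nonneg

open scoped MatrixOrder in
lemma Matrix.PosSemidef.posSemidef_sqrt {A : Matrix n n ℝ} (hA : A.PosSemidef) :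
    hA.sqrt.PosSemidef :=
  (CFC.sqrt_nonneg A).posSemidef

set_option maxHeartbeats 1000000

lemma det_one_add_smul' {C : Matrix n n ℝ} (hC : C.IsHermitian) (c : ℝ) :
    (1 + c • C).det = ∏ i, (1 + c * hC.eigenvalues i) := by
  have hU := (Matrix.mem_unitaryGroup_iff).mp hC.eigenvectorUnitary.2
  have h1 : (1 : Matrix n n ℝ) + c • C =
      (hC.eigenvectorUnitary : Matrix n n ℝ) *
        (diagonal (fun i => 1 + c * hC.eigenvalues i)) *
        (star (hC.eigenvectorUnitary : Matrix n n ℝ)) := by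
    conv_lhs => rw [hC.spectral_theorem]
    rw [← hU]
    have hd : (Matrix.diagonal fun i => 1 + c * hC.eigenvalues i) =
        1 + c • Matrix.diagonal hC.eigenvalues := by
      ext i j
      by_cases h : i = j <;> simp [Matrix.diagonal, Matrix.one_apply, h]
    rw [hd]
    simp [Matrix.mul_add, Matrix.add_mul, Matrix.smul_mul, Matrix.mul_smul, Matrix.mul_assoc, hU]
  rw [h1, Matrix.det_mul_right_comm, hU, Matrix.one_mul, det_diagonal]

lemma one_le_det_one_add {C : Matrix n n ℝ} (hC : C.PosSemidef) : 1 ≤ (1 + C).det := by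
  have h := det_one_add_smul' hC.1 1
  rw [one_smul] at h
  rw [h]
  calc (1:ℝ) = ∏ _i : n, 1 := by simp
    _ ≤ ∏ i, (1 + 1 * hC.1.eigenvalues i) := by
        apply Finset.prod_le_prod
        · intros; norm_num
        · intro i _
          have := hC.eigenvalues_nonneg i
          linarith

lemma det_one_add_pos {C : Matrix n n ℝ} (hC : C.PosSemidef) : 0 < (1 + C).det := by
  have := one_le_det_one_add hC
  linarith

lemma det_le_det_add {X Δ : Matrix n n ℝ} (hX : X.PosDef) (hΔ : Δ.PosSemidef) :
    X.det ≤ (X + Δ).det := by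
  have hXi := hX.inv
  set K := hXi.posSemidef.sqrt with hKdef
  have hKK : K * K = X⁻¹ := hXi.posSemidef.sqrt_mul_self
  have hKsymm : Kᵀ = K := by
    have := hXi.posSemidef.posSemidef_sqrt.1
    simpa [conjTranspose_eq_transpose_of_trivial] using this.eq
  have hsplit : X + Δ = X * (1 + X⁻¹ * Δ) := by
    rw [Matrix.mul_add, Matrix.mul_one, ← Matrix.mul_assoc,
      Matrix.mul_nonsing_inv _ (isUnit_iff_ne_zero.mpr hX.det_pos.ne'), Matrix.one_mul]
  rw [hsplit, det_mul]
  have h2 : (1 + X⁻¹ * Δ).det = (1 + K * Δ * K).det := by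
    rw [← hKK, Matrix.mul_assoc, Matrix.det_one_add_mul_comm]
  have h3 : (K * Δ * K).PosSemidef := by
    have := psd_conj hΔ K
    rwa [hKsymm] at this
  have h4 : 1 ≤ (1 + K * Δ * K).det := one_le_det_one_add h3
  calc X.det = X.det * 1 := (mul_one _).symm
    _ ≤ X.det * (1 + X⁻¹ * Δ).det := by
        rw [h2]; exact mul_le_mul_of_nonneg_left h4 hX.det_pos.le

lemma det_one_add_le_det_one_add {E F : Matrix n n ℝ} (hE : E.PosSemidef)
    (hFE : (F - E).PosSemidef) : (1 + E).det ≤ (1 + F).det := by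
  have h1 : ((1 : Matrix n n ℝ) + E).PosDef := Matrix.PosDef.add_posSemidef Matrix.PosDef.one hE
  have := det_le_det_add h1 hFE
  have heq : (1 : Matrix n n ℝ) + E + (F - E) = 1 + F := by abel
  rwa [heq] at this

lemma inv_psd_bound {B : Matrix n n ℝ} (hB : B.PosDef) {c : ℝ} (hc : 0 < c)
    (h : (B - c • (1 : Matrix n n ℝ)).PosSemidef) :
    (c⁻¹ • (1 : Matrix n n ℝ) - B⁻¹).PosSemidef := by
  have hBi := hB.inv
  set J := hBi.posSemidef.sqrt with hJdef
  have hJJ : J * J = B⁻¹ := hBi.posSemidef.sqrt_mul_self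
  have hJsymm : Jᵀ = J := by
    have := hBi.posSemidef.posSemidef_sqrt.1
    simpa [conjTranspose_eq_transpose_of_trivial] using this.eq
  have hdetJ : IsUnit J.det := by
    have : J.det * J.det = B⁻¹.det := by rw [← det_mul, hJJ]
    have hpos : (0:ℝ) < B⁻¹.det := hBi.det_pos
    have : J.det ≠ 0 := by intro h0; rw [h0, mul_zero] at this; linarith
    exact isUnit_iff_ne_zero.mpr this
  have hJBJ : J * B * J = 1 := by
    have hBinv : B = (J * J)⁻¹ := by rw [hJJ, Matrix.nonsing_inv_nonsing_inv _ (isUnit_iff_ne_zero.mpr hB.det_pos.ne')]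
    rw [hBinv, Matrix.mul_inv_rev, ← Matrix.mul_assoc, Matrix.mul_assoc (J * J⁻¹),
      Matrix.nonsing_inv_mul _ hdetJ, Matrix.mul_nonsing_inv _ hdetJ]
    simp
  have hkey : c⁻¹ • (J * (B - c • (1 : Matrix n n ℝ)) * J) =
      c⁻¹ • (1 : Matrix n n ℝ) - B⁻¹ := by
    rw [Matrix.mul_sub, Matrix.sub_mul, hJBJ, Matrix.mul_smul, Matrix.smul_mul, Matrix.mul_one,
      hJJ, smul_sub, smul_smul, inv_mul_cancel₀ hc.ne', one_smul]
  rw [← hkey]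
  exact psd_smul (by simpa [hJsymm] using psd_conj h J) (inv_nonneg.mpr hc.le)

lemma det_add_le_det_mul {B C : Matrix n n ℝ} (hB : B.PosDef)
    (hB1 : (B - 1).PosSemidef) (hC : C.PosSemidef) :
    (B + C).det ≤ B.det * (1 + C).det := by
  set S := hC.sqrt with hSdef
  have hSS : S * S = C := hC.sqrt_mul_self
  have hSsymm : Sᵀ = S := by
    have := hC.posSemidef_sqrt.1
    simpa [conjTranspose_eq_transpose_of_trivial] using this.eq
  have hsplit : B + C = B * (1 + B⁻¹ * C) := by
    rw [Matrix.mul_add, Matrix.mul_one, ← Matrix.mul_assoc,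
      Matrix.mul_nonsing_inv _ (isUnit_iff_ne_zero.mpr hB.det_pos.ne'), Matrix.one_mul]
  rw [hsplit, det_mul]
  have h2 : (1 + B⁻¹ * C).det = (1 + S * B⁻¹ * S).det := by
    rw [← hSS, ← Matrix.mul_assoc, Matrix.det_one_add_mul_comm, ← Matrix.mul_assoc]
  have hE : (S * B⁻¹ * S).PosSemidef := by
    have := psd_conj hB.inv.posSemidef S
    rwa [hSsymm] at this
  have hFE : (C - S * B⁻¹ * S).PosSemidef := by
    have h1 : ((1:ℝ)⁻¹ • (1 : Matrix n n ℝ) - B⁻¹).PosSemidef := by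
      apply inv_psd_bound hB one_pos
      simpa using hB1
    have h2 := psd_conj (by simpa using h1 : ((1 : Matrix n n ℝ) - B⁻¹).PosSemidef) S
    rw [hSsymm, Matrix.mul_sub, Matrix.sub_mul, Matrix.mul_one, hSS] at h2
    exact h2
  have h3 := det_one_add_le_det_one_add hE hFE
  rw [h2]
  exact mul_le_mul_of_nonneg_left h3 hB.det_pos.le

/-- `eigs M i` is the `i`-th largest eigenvalue of a Hermitian (symmetric) real matrix `M`
(junk value `0` if `M` is not Hermitian). -/
noncomputable def eigs {d : ℕ} (M : Matrix (Fin d) (Fin d) ℝ) : Fin d → ℝ :=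
  if h : M.IsHermitian then
    fun i => (h.eigenvalues ∘ Tuple.sort h.eigenvalues) i.rev
  else 0

/-- Term (a) of the paper's error analysis: difference of log-dets under truncation of `M`. -/
theorem stmt10 (d r : ℕ)
    (M Mhat : Matrix (Fin d) (Fin d) ℝ)
    (hM : M.PosSemidef) (hMhat : Mhat.PosSemidef) (hD : (M - Mhat).PosSemidef)
    (W : Matrix (Fin r) (Fin d) ℝ) (hW : W * Wᵀ = 1)
    (G : Matrix (Fin r) (Fin r) ℝ) (hGsymm : G.IsSymm) (hG : G.PosDef)
    (σ2 : ℝ) (hσ2 : 0 < σ2)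
    (hGσ : (G - σ2 • (1 : Matrix (Fin r) (Fin r) ℝ)).PosSemidef)
    (L : Matrix (Fin r) (Fin r) ℝ) (hL : L * Lᵀ = G⁻¹) :
    |(1 / 2) * Real.log (1 + Lᵀ * W * M * Wᵀ * L).det -
        (1 / 2) * Real.log (1 + Lᵀ * W * Mhat * Wᵀ * L).det| ≤
      (1 / 2) * ∑ i, Real.log (1 + eigs (M - Mhat) i / σ2) := by
  set P : Matrix (Fin r) (Fin d) ℝ := Lᵀ * W with hP
  have hPT : Pᵀ = Wᵀ * L := by rw [hP, transpose_mul, transpose_transpose]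
  set A : Matrix (Fin r) (Fin r) ℝ := P * M * Pᵀ with hA
  set Ahat : Matrix (Fin r) (Fin r) ℝ := P * Mhat * Pᵀ with hAhat
  set Cm : Matrix (Fin r) (Fin r) ℝ := P * (M - Mhat) * Pᵀ with hCm
  have hApsd : A.PosSemidef := psd_conj hM P
  have hAhatpsd : Ahat.PosSemidef := psd_conj hMhat P
  have hCmpsd : Cm.PosSemidef := psd_conj hD P
  have hAC : A = Ahat + Cm := by
    rw [hA, hAhat, hCm, Matrix.mul_sub, Matrix.sub_mul]
    abel
  have hgoal1 : Lᵀ * W * M * Wᵀ * L = A := by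
    rw [hA, hP, hPT]; simp only [Matrix.mul_assoc]
  have hgoal2 : Lᵀ * W * Mhat * Wᵀ * L = Ahat := by
    rw [hAhat, hP, hPT]; simp only [Matrix.mul_assoc]
  rw [hgoal1, hgoal2]
  set a := (1 + A).det with ha
  set b := (1 + Ahat).det with hb
  set c := (1 + Cm).det with hc
  have hb1 : 1 ≤ b := one_le_det_one_add hAhatpsd
  have hc1 : 1 ≤ c := one_le_det_one_add hCmpsd
  have hba : b ≤ a := by
    rw [ha, hb]
    exact det_one_add_le_det_one_add hAhatpsd (by rw [hAC]; simpa using hCmpsd)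
  have habc : a ≤ b * c := by
    have h := det_add_le_det_mul (B := 1 + Ahat) (C := Cm)
      (Matrix.PosDef.add_posSemidef Matrix.PosDef.one hAhatpsd) (by simpa using hAhatpsd)
      hCmpsd
    rw [ha, hAC]
    calc (1 + (Ahat + Cm)).det = (1 + Ahat + Cm).det := by rw [add_assoc]
      _ ≤ b * c := h
  -- step 2 : c ≤ t
  set lam := hD.1.eigenvalues with hlam
  have hlamnn : ∀ i, 0 ≤ lam i := fun i => hD.eigenvalues_nonneg i
  set t := ((1 : Matrix (Fin d) (Fin d) ℝ) + σ2⁻¹ • (M - Mhat)).det with ht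
  have hct : c ≤ t := by
    set S := hD.sqrt with hSdef
    have hSS : S * S = M - Mhat := hD.sqrt_mul_self
    have hSsymm : Sᵀ = S := by
      have := hD.posSemidef_sqrt.1
      simpa [conjTranspose_eq_transpose_of_trivial] using this.eq
    have h1 : c = (1 + (P * S) * (S * Pᵀ)).det := by
      rw [hc, hCm, ← hSS]; simp only [Matrix.mul_assoc]
    have h2 : (1 + (P * S) * (S * Pᵀ)).det = ((1 : Matrix (Fin d) (Fin d) ℝ) + (S * Pᵀ) * (P * S)).det :=
      Matrix.det_one_add_mul_comm _ _
    have hPtP : Pᵀ * P = Wᵀ * G⁻¹ * W := by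
      rw [hPT, hP, ← hL]; simp only [Matrix.mul_assoc]
    have h3 : (S * Pᵀ) * (P * S) = S * (Wᵀ * G⁻¹ * W) * S := by
      rw [← hPtP]; simp only [Matrix.mul_assoc]
    have hE : (S * (Wᵀ * G⁻¹ * W) * S).PosSemidef := by
      have := psd_conj (psd_conj hG.inv.posSemidef Wᵀ) S
      rwa [hSsymm, transpose_transpose] at this
    have hinner : ((σ2⁻¹ • (1 : Matrix (Fin d) (Fin d) ℝ)) - Wᵀ * G⁻¹ * W).PosSemidef := by
      have hq : ((1 : Matrix (Fin d) (Fin d) ℝ) - Wᵀ * W).PosSemidef := by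
        have hQQ : ((1 : Matrix (Fin d) (Fin d) ℝ) - Wᵀ * W)ᴴ * ((1 : Matrix (Fin d) (Fin d) ℝ) - Wᵀ * W) = (1 : Matrix (Fin d) (Fin d) ℝ) - Wᵀ * W := by
          have e1 : Wᵀ * W * (Wᵀ * W) = Wᵀ * W := by
            calc Wᵀ * W * (Wᵀ * W) = Wᵀ * (W * Wᵀ) * W := by simp only [Matrix.mul_assoc]
              _ = Wᵀ * W := by rw [hW, Matrix.mul_one]
          rw [conjTranspose_eq_transpose_of_trivial, transpose_sub, transpose_one, transpose_mul,
            transpose_transpose, Matrix.sub_mul, Matrix.one_mul, Matrix.mul_sub, Matrix.mul_one, e1]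
          abel
        have := Matrix.posSemidef_conjTranspose_mul_self ((1 : Matrix (Fin d) (Fin d) ℝ) - Wᵀ * W)
        rwa [hQQ] at this
      have hg := psd_conj (inv_psd_bound hG hσ2 hGσ) Wᵀ
      rw [transpose_transpose] at hg
      have hsum := hg.add (psd_smul hq (inv_nonneg.mpr hσ2.le))
      have heq : Wᵀ * (σ2⁻¹ • (1 : Matrix (Fin r) (Fin r) ℝ) - G⁻¹) * W +
          σ2⁻¹ • ((1 : Matrix (Fin d) (Fin d) ℝ) - Wᵀ * W) =
          σ2⁻¹ • (1 : Matrix (Fin d) (Fin d) ℝ) - Wᵀ * G⁻¹ * W := by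
        rw [Matrix.mul_sub, Matrix.sub_mul, Matrix.mul_smul, Matrix.smul_mul, Matrix.mul_one,
          smul_sub]
        abel
      rwa [heq] at hsum
    have hFE : (σ2⁻¹ • (M - Mhat) - S * (Wᵀ * G⁻¹ * W) * S).PosSemidef := by
      have := psd_conj hinner S
      rw [hSsymm, Matrix.mul_sub, Matrix.sub_mul, Matrix.mul_smul, Matrix.smul_mul,
        Matrix.mul_one, hSS] at this
      exact this
    have h4 := det_one_add_le_det_one_add hE hFE
    rw [h1, h2, h3, ht]
    exact h4
  have htprod : t = ∏ i, (1 + σ2⁻¹ * lam i) := det_one_add_smul' hD.1 σ2⁻¹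
  have hfactor : ∀ i, (0:ℝ) < 1 + σ2⁻¹ * lam i := fun i => by
    have := hlamnn i
    have := inv_nonneg.mpr hσ2.le
    nlinarith
  have ht1 : 1 ≤ t := by
    rw [htprod]
    calc (1:ℝ) = ∏ _i : Fin d, 1 := by simp
      _ ≤ ∏ i, (1 + σ2⁻¹ * lam i) := by
          apply Finset.prod_le_prod
          · intros; norm_num
          · intro i _
            have := hlamnn i
            have := inv_nonneg.mpr hσ2.le
            nlinarith
  -- RHS rewrite
  have hRHS : ∑ i, Real.log (1 + eigs (M - Mhat) i / σ2) = Real.log t := by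
    have hsum : ∑ i, Real.log (1 + eigs (M - Mhat) i / σ2) =
        ∑ i, Real.log (1 + lam i / σ2) := by
      simp only [eigs, dif_pos hD.1, Function.comp]
      exact Equiv.sum_comp (Fin.revPerm.trans (Tuple.sort hD.1.eigenvalues))
        (fun j => Real.log (1 + hD.1.eigenvalues j / σ2))
    rw [hsum, htprod, Real.log_prod (fun i _ => (hfactor i).ne')]
    congr 1
    ext i
    rw [inv_mul_eq_div]
  rw [hRHS]
  -- final log algebra
  have hb0 : (0:ℝ) < b := by linarith
  have hc0 : (0:ℝ) < c := by linarith
  have ha0 : (0:ℝ) < a := by linarith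
  have ht0 : (0:ℝ) < t := by linarith
  have hlog1 : Real.log b ≤ Real.log a := Real.log_le_log hb0 hba
  have hlog2 : Real.log a ≤ Real.log b + Real.log c := by
    calc Real.log a ≤ Real.log (b * c) := Real.log_le_log ha0 habc
      _ = Real.log b + Real.log c := Real.log_mul hb0.ne' hc0.ne'
  have hlog3 : Real.log c ≤ Real.log t := Real.log_le_log hc0 hct
  rw [abs_of_nonneg (by linarith)]
  linarith
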